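/- Let n ≥ 1 and let Z be an n×n matrix whose entries Z_{ij} are formal Laurent series over 𝔽₂ (elements of 𝔽₂((D)), with support bounded below). Suppose Z satisfies the reversal symmetry Z(1/D) = Z(D)^t in the coefficient-wise sense: for all indices i, j and all ℓ ∈ ℤ, the coefficient of D^ℓ in Z_{ij} equals the coefficient of D^{−ℓ} in Z_{ji}. Then every entry of Z has finite support, i.e., every entry of Z is a Laurent polynomial. -/
import Mathlib


/-- If an `n × n` matrix `Z` of formal Laurent series over 𝔽₂ satisfies the
reversal symmetry `Z(1/D) = Z(D)ᵗ` coefficient-wise, i.e.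
`coeff (Z i j) ℓ = coeff (Z j i) (-ℓ)` for all `i, j, ℓ`, then every entry of
`Z` has finite support, i.e. every entry is a Laurent polynomial. -/
theorem selfdual_stabilizer_entries_laurentPolynomial
    (n : ℕ) (hn : 1 ≤ n)
    (Z : Matrix (Fin n) (Fin n) (LaurentSeries (ZMod 2)))
    (hsymm : ∀ i j : Fin n, ∀ ℓ : ℤ, (Z i j).coeff ℓ = (Z j i).coeff (-ℓ)) :
    ∀ i j : Fin n, (Z i j).support.Finite := by
  intro i j
  have bdd : ∀ k l : Fin n, BddBelow (Z k l).support := by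
    intro k l
    rcases (Z k l).support.eq_empty_or_nonempty with h | h
    · rw [h]; exact bddBelow_empty
    · exact ⟨(Z k l).isWF_support.min h, fun x hx => (Z k l).isWF_support.min_le h hx⟩
  have h1 := bdd i j
  have h2 := bdd j i
  have hsub : (Z i j).support ⊆ -(Z j i).support := by
    intro ℓ hℓ
    simp only [Set.mem_neg, HahnSeries.mem_support] at *
    rw [← hsymm i j]
    exact hℓ
  have h3 : BddAbove (Z i j).support := h2.neg.mono hsub
  obtain ⟨a, ha⟩ := h1
  obtain ⟨b, hb⟩ := h3
  exact (Set.finite_Icc a b).subset fun x hx => ⟨ha hx, hb hx⟩
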